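/- Let q > 1 be a real number, and let n, h, c, s be integers with 0 ≤ s < h ≤ n, 1 ≤ c, and s + c ≤ n. With X_{n,h}(c,i,s) = (-1)^i (-q)^{i/2 - i²/2 + is} · ∏_{l=1}^{n-i}(1 - (-q)^{-l}) / [ ∏_{l=1}^{h-i}(1 - (-q)^{-l}) · ∏_{l=1}^{i-s}(1 - (-q)^{-l}) · ∏_{l=1}^{c-i+s}(1 - (-q)^{-l}) ], one has ∑_{i=s}^{min(s+c,h)} X_{n,h}(c,i,s)/X_{n,h}(c,s,s) = [ (-q)^{-(h-s)} (1 - (-q)^{-(n-h)}) / (1 - (-q)^{-(n-s)}) ] · ∑_{i=s}^{min(s+c-1,h)} X_{n-1,h}(c-1,i,s)/X_{n-1,h}(c-1,s,s). -/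

import Mathlib

open Finset

/-- The quantity `X_{n,h}(c,i,s)` from Lemma 5.21 of the paper. -/
noncomputable def Xnh (q : ℝ) (n h c s i : ℕ) : ℝ :=
  (-1 : ℝ) ^ i * (-q) ^ (((i : ℤ) * (1 - (i : ℤ))) / 2 + (i : ℤ) * (s : ℤ)) *
      (∏ l ∈ Finset.Icc 1 (n - i), (1 - (-q) ^ (-(l : ℤ)))) /
    ((∏ l ∈ Finset.Icc 1 (h - i), (1 - (-q) ^ (-(l : ℤ)))) *
      (∏ l ∈ Finset.Icc 1 (i - s), (1 - (-q) ^ (-(l : ℤ)))) *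
      (∏ l ∈ Finset.Icc 1 (c + s - i), (1 - (-q) ^ (-(l : ℤ)))))

lemma hpow_aux (q : ℝ) (k : ℕ) : (-q) ^ (-(k:ℤ)) = ((-q)⁻¹) ^ k := by
  rw [zpow_neg, ← inv_zpow, zpow_natCast]

lemma fac_pos (q : ℝ) (hq : 1 < q) (k : ℕ) (hk : k ≠ 0) : 0 < 1 - ((-q)⁻¹) ^ k := by
  have h0 : (0:ℝ) < q := lt_trans one_pos hq
  have h1 : |(-q)⁻¹| < 1 := by
    rw [abs_inv, abs_neg, abs_of_pos h0, inv_eq_one_div]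
    exact (div_lt_one h0).mpr hq
  have h2 : |((-q)⁻¹) ^ k| < 1 := by
    rw [abs_pow]; exact pow_lt_one₀ (abs_nonneg _) h1 hk
  have := le_abs_self (((-q)⁻¹) ^ k)
  linarith

lemma fac_ne (q : ℝ) (hq : 1 < q) (k : ℕ) (hk : k ≠ 0) : 1 - ((-q)⁻¹) ^ k ≠ 0 :=
  (fac_pos q hq k hk).ne'

lemma prodP_ne (q : ℝ) (hq : 1 < q) (m : ℕ) :
    (∏ l ∈ Icc 1 m, (1 - (-q) ^ (-(l:ℤ)))) ≠ 0 := by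
  rw [Finset.prod_ne_zero_iff]
  intro l hl
  rw [hpow_aux]
  exact fac_ne q hq l (by simp only [mem_Icc] at hl; omega)

lemma Xnh_ne (q : ℝ) (hq : 1 < q) (n h c s i : ℕ) : Xnh q n h c s i ≠ 0 := by
  have h0 : (0:ℝ) < q := lt_trans one_pos hq
  have hq0 : (-q) ≠ 0 := neg_ne_zero.mpr (ne_of_gt h0)
  unfold Xnh
  apply div_ne_zero
  · exact mul_ne_zero (mul_ne_zero (pow_ne_zero _ (by norm_num)) (zpow_ne_zero _ hq0))
      (prodP_ne q hq _)
  · exact mul_ne_zero (mul_ne_zero (prodP_ne q hq _) (prodP_ne q hq _)) (prodP_ne q hq _)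

set_option maxHeartbeats 1000000 in
lemma Xstep (q : ℝ) (hq : 1 < q) (n h c s i : ℕ) (h1 : s ≤ i) (h2 : i < h) (h3 : i < n)
    (h4 : i + 1 ≤ c + s) :
    Xnh q n h c s (i+1) * ((1 - ((-q)⁻¹)^(n-i)) * (1 - ((-q)⁻¹)^(i+1-s)))
      = -(((-q)⁻¹)^(i-s)) * (1 - ((-q)⁻¹)^(h-i)) * (1 - ((-q)⁻¹)^(c+s-i))
          * Xnh q n h c s i := by
  have h0 : (0:ℝ) < q := lt_trans one_pos hq
  have hq0 : (-q) ≠ 0 := neg_ne_zero.mpr (ne_of_gt h0)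
  unfold Xnh
  rw [show n - i = (n - (i+1)) + 1 by omega, show h - i = (h - (i+1)) + 1 by omega,
      show c + s - i = (c + s - (i+1)) + 1 by omega, show i + 1 - s = (i - s) + 1 by omega]
  have Pn : (∏ l ∈ Icc 1 ((n-(i+1))+1), (1 - (-q) ^ (-(l:ℤ))))
      = (∏ l ∈ Icc 1 (n-(i+1)), (1 - (-q) ^ (-(l:ℤ)))) * (1 - (-q) ^ (-(((n-(i+1))+1 : ℕ):ℤ))) :=
    Finset.prod_Icc_succ_top (Nat.le_add_left 1 _) _
  have Ph : (∏ l ∈ Icc 1 ((h-(i+1))+1), (1 - (-q) ^ (-(l:ℤ))))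
      = (∏ l ∈ Icc 1 (h-(i+1)), (1 - (-q) ^ (-(l:ℤ)))) * (1 - (-q) ^ (-(((h-(i+1))+1 : ℕ):ℤ))) :=
    Finset.prod_Icc_succ_top (Nat.le_add_left 1 _) _
  have Pc : (∏ l ∈ Icc 1 ((c+s-(i+1))+1), (1 - (-q) ^ (-(l:ℤ))))
      = (∏ l ∈ Icc 1 (c+s-(i+1)), (1 - (-q) ^ (-(l:ℤ)))) * (1 - (-q) ^ (-(((c+s-(i+1))+1 : ℕ):ℤ))) :=
    Finset.prod_Icc_succ_top (Nat.le_add_left 1 _) _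
  have Pi' : (∏ l ∈ Icc 1 ((i-s)+1), (1 - (-q) ^ (-(l:ℤ))))
      = (∏ l ∈ Icc 1 (i-s), (1 - (-q) ^ (-(l:ℤ)))) * (1 - (-q) ^ (-(((i-s)+1 : ℕ):ℤ))) :=
    Finset.prod_Icc_succ_top (Nat.le_add_left 1 _) _
  rw [Pn, Ph, Pc, Pi']
  have ee : ((i+1 : ℕ) : ℤ) * (1 - ((i+1 : ℕ) : ℤ)) / 2 + ((i+1 : ℕ) : ℤ) * (s : ℤ)
      = ((s:ℤ) - (i:ℤ)) + ((i:ℤ) * (1 - (i:ℤ)) / 2 + (i:ℤ) * (s:ℤ)) := by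
    have h3' : ((i:ℤ)+1) * (1 - ((i:ℤ)+1)) = (i:ℤ) * (1 - (i:ℤ)) - 2*(i:ℤ) := by ring
    have h4' : ((i:ℤ)+1) * (s:ℤ) = (i:ℤ) * (s:ℤ) + (s:ℤ) := by ring
    push_cast
    omega
  rw [ee, zpow_add₀ hq0]
  have es : (-q) ^ ((s:ℤ) - (i:ℤ)) = ((-q)⁻¹)^(i-s) := by
    rw [show (s:ℤ) - (i:ℤ) = -(((i-s : ℕ)):ℤ) by omega, hpow_aux]
  rw [es, pow_succ]
  simp only [hpow_aux]
  have k1 := prodP_ne q hq (h-(i+1))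
  have k2 := prodP_ne q hq (i-s)
  have k3 := prodP_ne q hq (c+s-(i+1))
  simp only [hpow_aux] at k1 k2 k3
  have f1 := fac_ne q hq ((h-(i+1))+1) (by omega)
  have f2 := fac_ne q hq ((i-s)+1) (by omega)
  have f3 := fac_ne q hq ((c+s-(i+1))+1) (by omega)
  set A1 := (∏ l ∈ Icc 1 (n-(i+1)), (1 - ((-q)⁻¹)^l)) with hA1
  set A2 := (∏ l ∈ Icc 1 (h-(i+1)), (1 - ((-q)⁻¹)^l)) with hA2
  set A3 := (∏ l ∈ Icc 1 (i-s), (1 - ((-q)⁻¹)^l)) with hA3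
  set A4 := (∏ l ∈ Icc 1 (c+s-(i+1)), (1 - ((-q)⁻¹)^l)) with hA4
  set B1 := (1 - ((-q)⁻¹)^((n-(i+1))+1)) with hB1
  set B2 := (1 - ((-q)⁻¹)^((h-(i+1))+1)) with hB2
  set B3 := (1 - ((-q)⁻¹)^((i-s)+1)) with hB3
  set B4 := (1 - ((-q)⁻¹)^((c+s-(i+1))+1)) with hB4
  set Z := ((-q) ^ ((i:ℤ) * (1 - (i:ℤ)) / 2 + (i:ℤ) * (s:ℤ))) with hZ
  set x := (((-q)⁻¹)^(i-s)) with hx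
  set S := ((-1:ℝ) ^ i) with hS
  field_simp

lemma pow_split (q : ℝ) (a b k : ℕ) (h : a = b + k) :
    ((-q)⁻¹:ℝ)^a = ((-q)⁻¹)^b * ((-q)⁻¹)^k := by rw [h, pow_add]

lemma pow_eqexp (q : ℝ) (a b : ℕ) (h : a = b) : ((-q)⁻¹:ℝ)^a = ((-q)⁻¹)^b := by rw [h]

set_option maxHeartbeats 1000000 in
lemma keyK (q : ℝ) (hq : 1 < q) (n h c s : ℕ) (hs : s < h) (hh : h ≤ n) (hsc : s + c ≤ n)
    (t : ℕ) : t + 1 ≤ c → t ≤ h - s →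
    Xnh q (n-1) h (c-1) s (s+t) * Xnh q n h c s s
        * ((1 - ((-q)⁻¹)^c) * (1 - ((-q)⁻¹)^(n-s-t)))
      = Xnh q n h c s (s+t) * Xnh q (n-1) h (c-1) s s
        * ((1 - ((-q)⁻¹)^(c-t)) * (1 - ((-q)⁻¹)^(n-s))) := by
  induction t with
  | zero => intro _ _; simp only [Nat.add_zero, Nat.sub_zero]; ring
  | succ t IH0 =>
    intro ht1 ht2
    have IH := IH0 (by omega) (by omega)
    have hA := Xstep q hq n h c s (s+t) (by omega) (by omega) (by omega) (by omega)
    have hB := Xstep q hq (n-1) h (c-1) s (s+t) (by omega) (by omega) (by omega) (by omega)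
    have r1 : ((-q)⁻¹:ℝ)^(n-(s+t)) = ((-q)⁻¹)^(n-s-t-1) * ((-q)⁻¹)^1 := pow_split q _ _ _ (by omega)
    have r2 : ((-q)⁻¹:ℝ)^(s+t+1-s) = ((-q)⁻¹)^t * ((-q)⁻¹)^1 := pow_split q _ _ _ (by omega)
    have r3 : ((-q)⁻¹:ℝ)^(s+t-s) = ((-q)⁻¹)^t := pow_eqexp q _ _ (by omega)
    have r4 : ((-q)⁻¹:ℝ)^(h-(s+t)) = ((-q)⁻¹)^(h-s-t) := pow_eqexp q _ _ (by omega)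
    have r5 : ((-q)⁻¹:ℝ)^(c+s-(s+t)) = ((-q)⁻¹)^(c-1-t) * ((-q)⁻¹)^1 := pow_split q _ _ _ (by omega)
    have r6 : ((-q)⁻¹:ℝ)^(n-1-(s+t)) = ((-q)⁻¹)^(n-s-t-1) := pow_eqexp q _ _ (by omega)
    have r7 : ((-q)⁻¹:ℝ)^(c-1+s-(s+t)) = ((-q)⁻¹)^(c-1-t) := pow_eqexp q _ _ (by omega)
    have r8 : ((-q)⁻¹:ℝ)^c = ((-q)⁻¹)^(c-1-t) * ((-q)⁻¹)^1 * ((-q)⁻¹)^t := by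
      rw [pow_split q c ((c-1-t)+1) t (by omega), pow_split q ((c-1-t)+1) (c-1-t) 1 rfl]
    have r9 : ((-q)⁻¹:ℝ)^(n-s-t) = ((-q)⁻¹)^(n-s-t-1) * ((-q)⁻¹)^1 := pow_split q _ _ _ (by omega)
    have r10 : ((-q)⁻¹:ℝ)^(c-t) = ((-q)⁻¹)^(c-1-t) * ((-q)⁻¹)^1 := pow_split q _ _ _ (by omega)
    have r11 : ((-q)⁻¹:ℝ)^(n-s) = ((-q)⁻¹)^(n-s-t-1) * ((-q)⁻¹)^1 * ((-q)⁻¹)^t := by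
      rw [pow_split q (n-s) ((n-s-t-1)+1) t (by omega), pow_split q ((n-s-t-1)+1) (n-s-t-1) 1 rfl]
    have r12 : ((-q)⁻¹:ℝ)^(n-s-(t+1)) = ((-q)⁻¹)^(n-s-t-1) := pow_eqexp q _ _ (by omega)
    have r13 : ((-q)⁻¹:ℝ)^(c-(t+1)) = ((-q)⁻¹)^(c-1-t) := pow_eqexp q _ _ (by omega)
    simp only [show s+(t+1) = s+t+1 from rfl] at *
    rw [r1, r2, r3, r4, r5] at hA
    rw [r6, r2, r3, r4, r7] at hB
    rw [r8, r9, r10, r11] at IH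
    rw [r8, r11, r12, r13]
    have hM1 : (1:ℝ) - ((-q)⁻¹)^(n-s-t-1) * ((-q)⁻¹)^1 ≠ 0 := by
      rw [← r9]; exact fac_ne q hq _ (by omega)
    have hM2 : (1:ℝ) - ((-q)⁻¹)^t * ((-q)⁻¹)^1 ≠ 0 := by
      rw [← r2]; exact fac_ne q hq _ (by omega)
    have hM3 : (1:ℝ) - ((-q)⁻¹)^(n-s-t-1) ≠ 0 := fac_ne q hq _ (by omega)
    have hM4 : (1:ℝ) - ((-q)⁻¹)^(c-1-t) * ((-q)⁻¹)^1 * ((-q)⁻¹)^t ≠ 0 := by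
      rw [← r8]; exact fac_ne q hq _ (by omega)
    refine mul_right_cancel₀ (mul_ne_zero (mul_ne_zero
      (mul_ne_zero hM1 hM2) (mul_ne_zero hM3 hM2)) (mul_ne_zero hM4 hM1)) ?_
    linear_combination
      (Xnh q n h c s s * ((1 - ((-q)⁻¹)^(c-1-t) * ((-q)⁻¹)^1 * ((-q)⁻¹)^t)
          * (1 - ((-q)⁻¹)^(n-s-t-1)))
        * ((1 - ((-q)⁻¹)^(n-s-t-1) * ((-q)⁻¹)^1) * (1 - ((-q)⁻¹)^t * ((-q)⁻¹)^1))
        * ((1 - ((-q)⁻¹)^(c-1-t) * ((-q)⁻¹)^1 * ((-q)⁻¹)^t)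
          * (1 - ((-q)⁻¹)^(n-s-t-1) * ((-q)⁻¹)^1))) * hB
      - (Xnh q (n-1) h (c-1) s s * ((1 - ((-q)⁻¹)^(c-1-t))
          * (1 - ((-q)⁻¹)^(n-s-t-1) * ((-q)⁻¹)^1 * ((-q)⁻¹)^t))
        * ((1 - ((-q)⁻¹)^(n-s-t-1)) * (1 - ((-q)⁻¹)^t * ((-q)⁻¹)^1))
        * ((1 - ((-q)⁻¹)^(c-1-t) * ((-q)⁻¹)^1 * ((-q)⁻¹)^t)
          * (1 - ((-q)⁻¹)^(n-s-t-1) * ((-q)⁻¹)^1))) * hA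
      + ((-(((-q)⁻¹)^t) * (1 - ((-q)⁻¹)^(h-s-t)) * (1 - ((-q)⁻¹)^(c-1-t)))
        * ((1 - ((-q)⁻¹)^(c-1-t) * ((-q)⁻¹)^1 * ((-q)⁻¹)^t) * (1 - ((-q)⁻¹)^(n-s-t-1)))
        * ((1 - ((-q)⁻¹)^(n-s-t-1) * ((-q)⁻¹)^1) * (1 - ((-q)⁻¹)^t * ((-q)⁻¹)^1))) * IH

lemma alg1 (w x u v z at' a0 b0 : ℝ) (ha0 : a0 ≠ 0) (hb0 : b0 ≠ 0)
    (f1 : 1 - z*v ≠ 0) (f2 : 1 - x*w ≠ 0) (f3 : 1 - u*x ≠ 0) (f4 : 1 - z*v*x ≠ 0) :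
    at'/a0 - v*x*(1-z)/(1-z*v*x) * ((at'*b0*((1-u)*(1-z*v*x)) / (a0*((1-u*x)*(1-z*v)))) / b0)
      = -(1-x*w)/(1-u*x) * ((-x*(1-v)*(1-u)*at' / ((1-z*v)*(1-x*w))) / a0)
        - (-(1-x)/(1-u*x) * (at'/a0)) := by
  have f1' : 1 - v*z ≠ 0 := by contrapose! f1; linarith
  have f3' : 1 - x*u ≠ 0 := by contrapose! f3; linarith
  have f4' : 1 - v*x*z ≠ 0 := by contrapose! f4; linarith
  field_simp
  ring

lemma alg2 (x u z at' a0 b0 : ℝ) (ha0 : a0 ≠ 0) (hb0 : b0 ≠ 0)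
    (f1 : 1 - z ≠ 0) (f3 : 1 - u*x ≠ 0) (f4 : 1 - z*x ≠ 0) :
    at'/a0 - x*(1-z)/(1-z*x) * ((at'*b0*((1-u)*(1-z*x)) / (a0*((1-u*x)*(1-z)))) / b0)
      = 0 - (-(1-x)/(1-u*x) * (at'/a0)) := by
  have f3' : 1 - x*u ≠ 0 := by contrapose! f3; linarith
  have f4' : 1 - x*z ≠ 0 := by contrapose! f4; linarith
  field_simp
  ring

set_option maxHeartbeats 2000000 in
/-- Lemma 5.22.1 (equation (5.12.1)) of the paper. -/
theorem stmt_10 (q : ℝ) (hq : 1 < q) (n h c s : ℕ)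
    (hs : s < h) (hh : h ≤ n) (hc : 1 ≤ c) (hsc : s + c ≤ n) :
    ∑ i ∈ Finset.Icc s (min (s + c) h), Xnh q n h c s i / Xnh q n h c s s
      = (-q) ^ (-((h : ℤ) - (s : ℤ))) * (1 - (-q) ^ (-((n : ℤ) - (h : ℤ)))) /
          (1 - (-q) ^ (-((n : ℤ) - (s : ℤ)))) *
        ∑ i ∈ Finset.Icc s (min (s + c - 1) h),
          Xnh q (n - 1) h (c - 1) s i / Xnh q (n - 1) h (c - 1) s s := by
  have h0 : (0:ℝ) < q := lt_trans one_pos hq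
  have eF1 : (-q) ^ (-((h:ℤ) - (s:ℤ))) = ((-q)⁻¹)^(h-s) := by
    rw [show -((h:ℤ) - (s:ℤ)) = -(((h - s : ℕ) : ℤ)) by omega, hpow_aux]
  have eF2 : (-q) ^ (-((n:ℤ) - (h:ℤ))) = ((-q)⁻¹)^(n-h) := by
    rw [show -((n:ℤ) - (h:ℤ)) = -(((n - h : ℕ) : ℤ)) by omega, hpow_aux]
  have eF3 : (-q) ^ (-((n:ℤ) - (s:ℤ))) = ((-q)⁻¹)^(n-s) := by
    rw [show -((n:ℤ) - (s:ℤ)) = -(((n - s : ℕ) : ℤ)) by omega, hpow_aux]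
  rw [eF1, eF2, eF3]
  set R : ℝ := (-q)⁻¹ with hR
  set m : ℕ := min c (h - s) with hm
  set m' : ℕ := min (c - 1) (h - s) with hm'
  have hmm : m' ≤ m := by omega
  rw [show min (s + c) h = s + m by omega, show min (s + c - 1) h = s + m' by omega]
  rw [← Finset.Ico_add_one_right_eq_Icc s (s+m), ← Finset.Ico_add_one_right_eq_Icc s (s+m'),
      Finset.sum_Ico_eq_sum_range, Finset.sum_Ico_eq_sum_range]
  rw [show s + m + 1 - s = m + 1 by omega, show s + m' + 1 - s = m' + 1 by omega]
  set F : ℝ := R^(h-s) * (1 - R^(n-h)) / (1 - R^(n-s)) with hF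
  set G : ℕ → ℝ := fun t => if t ≤ m then
      -(1 - R^t) / (1 - R^c) * (Xnh q n h c s (s+t) / Xnh q n h c s s)
    else 0 with hG
  have key : ∀ t ∈ Finset.range (m+1),
      Xnh q n h c s (s+t) / Xnh q n h c s s
        - (if t ≤ m' then F * (Xnh q (n-1) h (c-1) s (s+t) / Xnh q (n-1) h (c-1) s s) else 0)
      = G (t+1) - G t := by
    intro t ht
    simp only [Finset.mem_range] at ht
    have ha0 := Xnh_ne q hq n h c s s
    have hb0 := Xnh_ne q hq (n-1) h (c-1) s s
    by_cases h1 : t < m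
    · have htm' : t ≤ m' := by omega
      rw [if_pos htm']
      simp only [hG]
      rw [if_pos (show t+1 ≤ m by omega), if_pos (show t ≤ m by omega)]
      simp only [show s+(t+1) = s+t+1 from rfl]
      have hA := Xstep q hq n h c s (s+t) (by omega) (by omega) (by omega) (by omega)
      have hK := keyK q hq n h c s hs hh hsc t (by omega) (by omega)
      rw [← hR] at hA hK
      have r1 : (R:ℝ)^(n-(s+t)) = R^(n-h) * R^(h-s-t) :=
        pow_split q _ _ _ (by omega)
      have r2 : (R:ℝ)^(s+t+1-s) = R^t * R^1 := pow_split q _ _ _ (by omega)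
      have r3 : (R:ℝ)^(s+t-s) = R^t := pow_eqexp q _ _ (by omega)
      have r4 : (R:ℝ)^(h-(s+t)) = R^(h-s-t) := pow_eqexp q _ _ (by omega)
      have r5 : (R:ℝ)^(c+s-(s+t)) = R^(c-t) := pow_eqexp q _ _ (by omega)
      have r6 : (R:ℝ)^c = R^(c-t) * R^t := pow_split q _ _ _ (by omega)
      have r7 : (R:ℝ)^(n-s-t) = R^(n-h) * R^(h-s-t) :=
        pow_split q _ _ _ (by omega)
      have r8 : (R:ℝ)^(n-s) = R^(n-h) * R^(h-s-t) * R^t := by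
        rw [pow_split q (n-s) ((n-h)+(h-s-t)) t (by omega),
          pow_split q ((n-h)+(h-s-t)) (n-h) (h-s-t) rfl]
      have r9 : (R:ℝ)^(h-s) = R^(h-s-t) * R^t := pow_split q _ _ _ (by omega)
      have r10 : (R:ℝ)^(t+1) = R^t * R^1 := pow_split q _ _ _ (by omega)
      rw [r1, r2, r3, r4, r5] at hA
      rw [r6, r7, r8] at hK
      rw [hF]
      rw [r6, r8, r9, r10]
      have f1 : (1:ℝ) - R^(n-h) * R^(h-s-t) ≠ 0 := by
        rw [← r7]; exact fac_ne _ hq _ (by omega)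
      have f2 : (1:ℝ) - R^t * R^1 ≠ 0 := by
        rw [← r10]; exact fac_ne _ hq _ (by omega)
      have f3 : (1:ℝ) - R^(c-t) * R^t ≠ 0 := by
        rw [← r6]; exact fac_ne _ hq _ (by omega)
      have f4 : (1:ℝ) - R^(n-h) * R^(h-s-t) * R^t ≠ 0 := by
        rw [← r8]; exact fac_ne _ hq _ (by omega)
      have ha2 : Xnh q n h c s (s+t+1)
          = (-(R^t) * (1 - R^(h-s-t)) * (1 - R^(c-t))
              * Xnh q n h c s (s+t))
            / ((1 - R^(n-h) * R^(h-s-t)) * (1 - R^t * R^1)) := by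
        rw [eq_div_iff (mul_ne_zero f1 f2)]; linear_combination hA
      have hb2 : Xnh q (n-1) h (c-1) s (s+t)
          = (Xnh q n h c s (s+t) * Xnh q (n-1) h (c-1) s s
              * ((1 - R^(c-t)) * (1 - R^(n-h) * R^(h-s-t) * R^t)))
            / (Xnh q n h c s s * ((1 - R^(c-t) * R^t)
              * (1 - R^(n-h) * R^(h-s-t)))) := by
        rw [eq_div_iff (mul_ne_zero ha0 (mul_ne_zero f3 f1))]; linear_combination hK
      rw [ha2, hb2]
      linear_combination alg1 (R^1) (R^t) (R^(c-t)) (R^(h-s-t)) (R^(n-h))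
        (Xnh q n h c s (s+t)) (Xnh q n h c s s) (Xnh q (n-1) h (c-1) s s)
        ha0 hb0 f1 f2 f3 f4
    · have htm : t = m := by omega
      simp only [hG]
      rw [if_neg (show ¬ (t+1 ≤ m) by omega), if_pos (show t ≤ m by omega)]
      by_cases h2 : t ≤ m'
      · rw [if_pos h2]
        have hts : t = h - s := by omega
        have hK := keyK q hq n h c s hs hh hsc t (by omega) (by omega)
        rw [← hR] at hK
        have r5 : (R:ℝ)^(n-s-t) = R^(n-h) := pow_eqexp q _ _ (by omega)
        have r6 : (R:ℝ)^c = R^(c-t) * R^t := pow_split q _ _ _ (by omega)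
        have r8 : (R:ℝ)^(n-s) = R^(n-h) * R^t := pow_split q _ _ _ (by omega)
        have r9 : (R:ℝ)^(h-s) = R^t := pow_eqexp q _ _ (by omega)
        rw [r6, r5, r8] at hK
        rw [hF]
        rw [r6, r8, r9]
        have f1 : (1:ℝ) - R^(n-h) ≠ 0 := fac_ne _ hq _ (by omega)
        have f3 : (1:ℝ) - R^(c-t) * R^t ≠ 0 := by
          rw [← r6]; exact fac_ne _ hq _ (by omega)
        have f4 : (1:ℝ) - R^(n-h) * R^t ≠ 0 := by
          rw [← r8]; exact fac_ne _ hq _ (by omega)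
        have hb2 : Xnh q (n-1) h (c-1) s (s+t)
            = (Xnh q n h c s (s+t) * Xnh q (n-1) h (c-1) s s
                * ((1 - R^(c-t)) * (1 - R^(n-h) * R^t)))
              / (Xnh q n h c s s * ((1 - R^(c-t) * R^t)
                * (1 - R^(n-h)))) := by
          rw [eq_div_iff (mul_ne_zero ha0 (mul_ne_zero f3 f1))]; linear_combination hK
        rw [hb2]
        linear_combination alg2 (R^t) (R^(c-t)) (R^(n-h))
          (Xnh q n h c s (s+t)) (Xnh q n h c s s) (Xnh q (n-1) h (c-1) s s)
          ha0 hb0 f1 f3 f4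
      · rw [if_neg h2]
        rw [show t = c from by omega]
        have fc : (1:ℝ) - R^c ≠ 0 := fac_ne _ hq _ (by omega)
        have hd : -(1 - R^c)/(1 - R^c) = -1 := by rw [neg_div, div_self fc]
        rw [hd]
        ring
  have hG0 : G 0 = 0 := by simp [hG]
  have hGm : G (m+1) = 0 := by simp [hG]
  have H : (∑ t ∈ Finset.range (m+1), Xnh q n h c s (s+t) / Xnh q n h c s s)
      - (∑ t ∈ Finset.range (m+1), (if t ≤ m' then
          F * (Xnh q (n-1) h (c-1) s (s+t) / Xnh q (n-1) h (c-1) s s) else 0)) = 0 := by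
    rw [← Finset.sum_sub_distrib, Finset.sum_congr rfl key, Finset.sum_range_sub, hGm, hG0,
      sub_zero]
  have HB : (∑ t ∈ Finset.range (m+1), (if t ≤ m' then
        F * (Xnh q (n-1) h (c-1) s (s+t) / Xnh q (n-1) h (c-1) s s) else 0))
      = ∑ t ∈ Finset.range (m'+1),
          F * (Xnh q (n-1) h (c-1) s (s+t) / Xnh q (n-1) h (c-1) s s) := by
    rw [← Finset.sum_filter]
    congr 1
    ext x
    simp only [Finset.mem_filter, Finset.mem_range]
    omega
  rw [Finset.mul_sum]
  linarith [H, HB]
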